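/- arXiv:1011.5053 — 4 statements merged into one kernel-verified Lean document; each statement's English description precedes it below -/
import Mathlib

section
/- Let B > 0. There exist constants α > 0 and η ∈ (0,1), depending only on B, such that for all positive integers m ≤ d, for every d×m random matrix Y whose entries Y_{ij} are independent, centered, of variance 1 and fourth moment E[Y_{ij}⁴] ≤ B, for every d×d diagonal positive semidefinite matrix Σ with Σ ≤ I_d, and for every unit vector x ∈ ℝ^m: P[‖√Σ · Y x‖₂² ≤ α·(trace(Σ) − 1)] ≤ η^{trace(Σ)}. -/
open MeasureTheory ProbabilityTheory

section Helpers

variable {m : ℕ} {Ω : Type} [MeasurableSpace Ω] {μ : Measure Ω}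

lemma sb_exp_neg_le_quad {u : ℝ} (hu : 0 ≤ u) : Real.exp (-u) ≤ 1 - u + u ^ 2 := by
  have h1 : u + 1 ≤ Real.exp u := Real.add_one_le_exp u
  have h2 : Real.exp (-u) * Real.exp u = 1 := by rw [← Real.exp_add]; simp
  nlinarith [Real.exp_pos (-u), Real.exp_pos u, sq_nonneg u]

lemma sb_integrable_pow_of_memL4 [IsFiniteMeasure μ] {f : Ω → ℝ} (hf : MemLp f 4 μ) {k : ℕ}
    (hk : k ≤ 4) : Integrable (fun ω => f ω ^ k) μ := by
  rcases Nat.eq_zero_or_pos k with h | h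
  · simp [h]
  have h1 : MemLp f (k : ENNReal) μ := hf.mono_exponent (by exact_mod_cast hk)
  have h2 := h1.integrable_norm_rpow (by exact_mod_cast h.ne') (by simp)
  have h3 : ((k : ENNReal)).toReal = (k : ℝ) := by simp
  rw [h3] at h2
  refine h2.mono' ?_ ?_
  · exact (hf.aestronglyMeasurable.aemeasurable.pow_const k).aestronglyMeasurable
  · filter_upwards with ω
    rw [Real.norm_eq_abs, abs_pow, ← Real.rpow_natCast |f ω| k]
    exact le_of_eq rfl

lemma sb_sum_memL4 {W : Fin m → Ω → ℝ} (hL4 : ∀ j, MemLp (W j) 4 μ) (s : Finset (Fin m)) :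
    MemLp (fun ω => ∑ j ∈ s, W j ω) 4 μ :=
  memLp_finset_sum s (fun j _ => hL4 j)

end Helpers

section Indep

variable {d m : ℕ} {Ω : Type} [MeasurableSpace Ω] {μ : Measure Ω}

lemma sb_row_iIndep {Y : Fin d → Fin m → Ω → ℝ}
    (hindep : iIndepFun (fun p : Fin d × Fin m => Y p.1 p.2) μ)
    (i : Fin d) :
    iIndepFun (fun j => Y i j) μ := by
  rw [iIndepFun_iff_measure_inter_preimage_eq_mul] at hindep ⊢
  intro S sets hsets
  have hinj : Set.InjOn (fun j : Fin m => (i, j)) S := fun a _ b _ h => by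
    simpa using congrArg Prod.snd h
  have h := hindep (S.image (fun j => (i, j))) (sets := fun p => sets p.2)
    (fun p hp => by
      rcases Finset.mem_image.1 hp with ⟨j, hj, rfl⟩
      exact hsets j hj)
  have h1 : (⋂ p ∈ S.image (fun j => (i, j)), (fun ω => Y p.1 p.2 ω) ⁻¹' sets p.2)
      = ⋂ j ∈ S, Y i j ⁻¹' sets j := by
    ext ω; simp [Finset.mem_image]
  have h2 : ∏ p ∈ S.image (fun j => (i, j)), μ ((fun ω => Y p.1 p.2 ω) ⁻¹' sets p.2)
      = ∏ j ∈ S, μ (Y i j ⁻¹' sets j) := Finset.prod_image hinj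
  rw [h1, h2] at h
  exact h

lemma sb_rows_iIndep [IsProbabilityMeasure μ] {Y : Fin d → Fin m → Ω → ℝ}
    (hmeas : ∀ i j, Measurable (Y i j))
    (hindep : iIndepFun (fun p : Fin d × Fin m => Y p.1 p.2) μ) :
    iIndepFun
      (fun i ω (j : Fin m) => Y i j ω) μ := by
  classical
  rw [iIndepFun_iff_measure_inter_preimage_eq_mul]
  intro S sets hsets
  induction S using Finset.induction_on with
  | empty => simp
  | @insert a s ha ih =>
    have hsets' : ∀ i ∈ s, MeasurableSet (sets i) := fun i hi =>
      hsets i (Finset.mem_insert_of_mem hi)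
    have ihs := ih hsets'
    set T : Finset (Fin d × Fin m) := s ×ˢ Finset.univ with hT
    set A0 : Finset (Fin d × Fin m) := {a} ×ˢ Finset.univ with hA0
    have hdisj : Disjoint A0 T := by
      simp only [Finset.disjoint_left, hA0, hT, Finset.mem_product, Finset.mem_singleton]
      rintro ⟨p1, p2⟩ ⟨rfl, -⟩ ⟨hp, -⟩
      exact ha hp
    have hIF := iIndepFun.indepFun_finset A0 T hdisj hindep (fun p => hmeas p.1 p.2)
    have haA0 : ∀ j : Fin m, ((a, j) : Fin d × Fin m) ∈ A0 := by
      intro j; simp [hA0]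
    set φ : (A0 → ℝ) → (Fin m → ℝ) := fun v j => v ⟨(a, j), haA0 j⟩ with hφ
    have hφm : Measurable φ := measurable_pi_lambda _ (fun j => measurable_pi_apply _)
    have hmem : ∀ i : Fin d, i ∈ s → ∀ j : Fin m, ((i, j) : Fin d × Fin m) ∈ T := by
      intro i hi j; simp [hT, hi]
    set BigSet : Set ((↥T) → ℝ) :=
      ⋂ (i : Fin d), ⋂ (hi : i ∈ s),
        (fun (v : (↥T) → ℝ) (j : Fin m) => v ⟨(i, j), hmem i hi j⟩) ⁻¹' sets i with hBig
    have hBigMeas : MeasurableSet BigSet := by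
      refine MeasurableSet.iInter fun i => MeasurableSet.iInter fun hi => ?_
      exact (measurable_pi_lambda _ (fun j => measurable_pi_apply _)) (hsets' i hi)
    have hpre : (⋂ i ∈ s, (fun ω (j : Fin m) => Y i j ω) ⁻¹' sets i)
        = (fun ω (p : T) => Y p.1.1 p.1.2 ω) ⁻¹' BigSet := by
      ext ω
      simp only [Set.mem_iInter, Set.mem_preimage, hBig, Finset.mem_coe]
    have hpreA : ((fun ω (j : Fin m) => Y a j ω) ⁻¹' sets a)
        = (fun ω (p : A0) => Y p.1.1 p.1.2 ω) ⁻¹' (φ ⁻¹' sets a) := rfl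
    have hkey := hIF.measure_inter_preimage_eq_mul (φ ⁻¹' sets a) BigSet
      (hφm (hsets a (Finset.mem_insert_self a s))) hBigMeas
    rw [Finset.set_biInter_insert, Finset.prod_insert ha, hpre, hpreA, hkey, ← hpre, ihs, ← hpreA]

end Indep

section Moments

variable {m : ℕ} {Ω : Type} [MeasurableSpace Ω] {μ : Measure Ω} [IsProbabilityMeasure μ]
variable {W : Fin m → Ω → ℝ} (hmeas : ∀ j, Measurable (W j))
  (hindep : iIndepFun W μ)
  (hL4 : ∀ j, MemLp (W j) 4 μ) (hmean : ∀ j, ∫ ω, W j ω ∂μ = 0)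

include hmeas hindep hL4 hmean

lemma sb_key_prod (s : Finset (Fin m)) {a : Fin m} (ha : a ∉ s) (p q : ℕ) (hp : p ≤ 4)
    (hq : q ≤ 4) :
    Integrable (fun ω => (∑ j ∈ s, W j ω) ^ p * W a ω ^ q) μ ∧
    ∫ ω, (∑ j ∈ s, W j ω) ^ p * W a ω ^ q ∂μ
      = (∫ ω, (∑ j ∈ s, W j ω) ^ p ∂μ) * ∫ ω, W a ω ^ q ∂μ := by
  have hsum : (∑ j ∈ s, W j) = fun ω => ∑ j ∈ s, W j ω := by
    ext ω; simp
  have hI : IndepFun (fun ω => ∑ j ∈ s, W j ω) (W a) μ := by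
    rw [← hsum]
    exact hindep.indepFun_finset_sum_of_notMem hmeas ha
  have hip : IndepFun (fun ω => (∑ j ∈ s, W j ω) ^ p) (fun ω => W a ω ^ q) μ :=
    hI.comp (measurable_id.pow_const p) (measurable_id.pow_const q)
  have h1 : Integrable (fun ω => (∑ j ∈ s, W j ω) ^ p) μ :=
    sb_integrable_pow_of_memL4 (sb_sum_memL4 hL4 s) hp
  have h2 : Integrable (fun ω => W a ω ^ q) μ := sb_integrable_pow_of_memL4 (hL4 a) hq
  exact ⟨hip.integrable_mul h1 h2, hip.integral_mul_eq_mul_integral h1.aestronglyMeasurable h2.aestronglyMeasurable⟩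

lemma sb_sum_mean_zero (s : Finset (Fin m)) : ∫ ω, ∑ j ∈ s, W j ω ∂μ = 0 := by
  rw [integral_finset_sum s (fun j _ => (hL4 j).integrable (by norm_num))]
  simp [hmean]

lemma sb_moment2 (s : Finset (Fin m)) :
    ∫ ω, (∑ j ∈ s, W j ω) ^ 2 ∂μ = ∑ j ∈ s, ∫ ω, W j ω ^ 2 ∂μ := by
  classical
  induction s using Finset.induction_on with
  | empty => simp
  | @insert a s ha ih =>
    have hkey := sb_key_prod hmeas hindep hL4 hmean s ha
    have expand : ∀ ω, (∑ j ∈ insert a s, W j ω) ^ 2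
        = (∑ j ∈ s, W j ω) ^ 2 + (2 * ((∑ j ∈ s, W j ω) ^ 1 * W a ω ^ 1) + W a ω ^ 2) := by
      intro ω; rw [Finset.sum_insert ha]; ring
    have i20 : Integrable (fun ω => (∑ j ∈ s, W j ω) ^ 2) μ :=
      sb_integrable_pow_of_memL4 (sb_sum_memL4 hL4 s) (by norm_num)
    have i11 := (hkey 1 1 (by norm_num) (by norm_num)).1
    have i02 : Integrable (fun ω => W a ω ^ 2) μ :=
      sb_integrable_pow_of_memL4 (hL4 a) (by norm_num)
    calc ∫ ω, (∑ j ∈ insert a s, W j ω) ^ 2 ∂μ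
        = ∫ ω, ((∑ j ∈ s, W j ω) ^ 2
            + (2 * ((∑ j ∈ s, W j ω) ^ 1 * W a ω ^ 1) + W a ω ^ 2)) ∂μ := by
          simp_rw [expand]
      _ = (∫ ω, (∑ j ∈ s, W j ω) ^ 2 ∂μ)
            + (2 * ∫ ω, ((∑ j ∈ s, W j ω) ^ 1 * W a ω ^ 1) ∂μ + ∫ ω, W a ω ^ 2 ∂μ) := by
          have i2c : Integrable (fun ω => 2 * ((∑ j ∈ s, W j ω) ^ 1 * W a ω ^ 1)) μ :=
            i11.const_mul 2
          have isum : Integrable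
              (fun ω => 2 * ((∑ j ∈ s, W j ω) ^ 1 * W a ω ^ 1) + W a ω ^ 2) μ := i2c.add i02
          rw [integral_add i20 isum, integral_add i2c i02, integral_const_mul]
      _ = ∑ j ∈ insert a s, ∫ ω, W j ω ^ 2 ∂μ := by
          rw [(hkey 1 1 (by norm_num) (by norm_num)).2, Finset.sum_insert ha, ih]
          simp only [pow_one]
          rw [hmean a]
          ring

lemma sb_moment4 {B : ℝ} (hB : 0 ≤ B) {q : Fin m → ℝ}
    (hq : ∀ j, ∫ ω, W j ω ^ 2 ∂μ = q j) (h4 : ∀ j, ∫ ω, W j ω ^ 4 ∂μ ≤ B * q j ^ 2)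
    (s : Finset (Fin m)) :
    ∫ ω, (∑ j ∈ s, W j ω) ^ 4 ∂μ ≤ (B + 3) * (∑ j ∈ s, q j) ^ 2 := by
  classical
  have hq0 : ∀ j, 0 ≤ q j := fun j => (hq j) ▸ integral_nonneg (fun ω => sq_nonneg _)
  induction s using Finset.induction_on with
  | empty => simp
  | @insert a s ha ih =>
    have hkey := sb_key_prod hmeas hindep hL4 hmean s ha
    have hQ0 : 0 ≤ ∑ j ∈ s, q j := Finset.sum_nonneg (fun j _ => hq0 j)
    have i40 : Integrable (fun ω => (∑ j ∈ s, W j ω) ^ 4) μ :=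
      sb_integrable_pow_of_memL4 (sb_sum_memL4 hL4 s) le_rfl
    have i31 := (hkey 3 1 (by norm_num) (by norm_num)).1
    have i22 := (hkey 2 2 (by norm_num) (by norm_num)).1
    have i13 := (hkey 1 3 (by norm_num) (by norm_num)).1
    have i04 : Integrable (fun ω => W a ω ^ 4) μ := sb_integrable_pow_of_memL4 (hL4 a) le_rfl
    have c31 : Integrable (fun ω => 4 * ((∑ j ∈ s, W j ω) ^ 3 * W a ω ^ 1)) μ := i31.const_mul 4
    have c22 : Integrable (fun ω => 6 * ((∑ j ∈ s, W j ω) ^ 2 * W a ω ^ 2)) μ := i22.const_mul 6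
    have c13 : Integrable (fun ω => 4 * ((∑ j ∈ s, W j ω) ^ 1 * W a ω ^ 3)) μ := i13.const_mul 4
    have s3 : Integrable (fun ω => 4 * ((∑ j ∈ s, W j ω) ^ 1 * W a ω ^ 3) + W a ω ^ 4) μ :=
      c13.add i04
    have s2 : Integrable (fun ω => 6 * ((∑ j ∈ s, W j ω) ^ 2 * W a ω ^ 2)
        + (4 * ((∑ j ∈ s, W j ω) ^ 1 * W a ω ^ 3) + W a ω ^ 4)) μ := c22.add s3
    have s1 : Integrable (fun ω => 4 * ((∑ j ∈ s, W j ω) ^ 3 * W a ω ^ 1)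
        + (6 * ((∑ j ∈ s, W j ω) ^ 2 * W a ω ^ 2)
          + (4 * ((∑ j ∈ s, W j ω) ^ 1 * W a ω ^ 3) + W a ω ^ 4))) μ := c31.add s2
    have expand : ∀ ω, (∑ j ∈ insert a s, W j ω) ^ 4
        = (∑ j ∈ s, W j ω) ^ 4 + (4 * ((∑ j ∈ s, W j ω) ^ 3 * W a ω ^ 1)
          + (6 * ((∑ j ∈ s, W j ω) ^ 2 * W a ω ^ 2)
            + (4 * ((∑ j ∈ s, W j ω) ^ 1 * W a ω ^ 3) + W a ω ^ 4))) := by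
      intro ω; rw [Finset.sum_insert ha]; ring
    have e31 : ∫ ω, (∑ j ∈ s, W j ω) ^ 3 * W a ω ^ 1 ∂μ = 0 := by
      rw [(hkey 3 1 (by norm_num) (by norm_num)).2]
      simp only [pow_one]
      rw [hmean a, mul_zero]
    have e13 : ∫ ω, (∑ j ∈ s, W j ω) ^ 1 * W a ω ^ 3 ∂μ = 0 := by
      rw [(hkey 1 3 (by norm_num) (by norm_num)).2]
      have h0 := sb_sum_mean_zero hmeas hindep hL4 hmean s
      simp only [pow_one]
      rw [h0, zero_mul]
    have e22 : ∫ ω, (∑ j ∈ s, W j ω) ^ 2 * W a ω ^ 2 ∂μ = (∑ j ∈ s, q j) * q a := by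
      rw [(hkey 2 2 (by norm_num) (by norm_num)).2, sb_moment2 hmeas hindep hL4 hmean s, hq a]
      congr 1
      exact Finset.sum_congr rfl (fun j _ => hq j)
    have e04 := h4 a
    calc ∫ ω, (∑ j ∈ insert a s, W j ω) ^ 4 ∂μ
        = ∫ ω, ((∑ j ∈ s, W j ω) ^ 4 + (4 * ((∑ j ∈ s, W j ω) ^ 3 * W a ω ^ 1)
          + (6 * ((∑ j ∈ s, W j ω) ^ 2 * W a ω ^ 2)
            + (4 * ((∑ j ∈ s, W j ω) ^ 1 * W a ω ^ 3) + W a ω ^ 4)))) ∂μ := by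
          simp_rw [expand]
      _ = (∫ ω, (∑ j ∈ s, W j ω) ^ 4 ∂μ)
            + (4 * ∫ ω, ((∑ j ∈ s, W j ω) ^ 3 * W a ω ^ 1) ∂μ
          + (6 * ∫ ω, ((∑ j ∈ s, W j ω) ^ 2 * W a ω ^ 2) ∂μ
            + (4 * ∫ ω, ((∑ j ∈ s, W j ω) ^ 1 * W a ω ^ 3) ∂μ + ∫ ω, W a ω ^ 4 ∂μ))) := by
          rw [integral_add i40 s1, integral_add c31 s2, integral_add c22 s3,
            integral_add c13 i04, integral_const_mul, integral_const_mul, integral_const_mul]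
      _ = (∫ ω, (∑ j ∈ s, W j ω) ^ 4 ∂μ)
            + (6 * ((∑ j ∈ s, q j) * q a) + ∫ ω, W a ω ^ 4 ∂μ) := by
          rw [e31, e13, e22]; ring
      _ ≤ (B + 3) * (∑ j ∈ insert a s, q j) ^ 2 := by
          rw [Finset.sum_insert ha]
          nlinarith [ih, e04, hq0 a, hQ0, sq_nonneg (q a), mul_nonneg hQ0 (hq0 a)]

lemma sb_row_mgf_bound {B : ℝ} (hB : 0 ≤ B) {q : Fin m → ℝ}
    (hq : ∀ j, ∫ ω, W j ω ^ 2 ∂μ = q j) (h4 : ∀ j, ∫ ω, W j ω ^ 4 ∂μ ≤ B * q j ^ 2)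
    (hsum : ∑ j, q j = 1) {t lam : ℝ} (ht : 0 < t) (htB : t * (B + 3) ≤ 1 / 2)
    (hlam0 : 0 ≤ lam) (hlam1 : lam ≤ 1) :
    ∫ ω, Real.exp (-t * (lam * (∑ j, W j ω) ^ 2)) ∂μ ≤ Real.exp (-(t * lam) / 2) := by
  have hZm : Measurable (fun ω => ∑ j, W j ω) := by
    exact Finset.measurable_sum _ (fun j _ => hmeas j)
  have hZ2 : ∫ ω, (∑ j, W j ω) ^ 2 ∂μ = 1 := by
    rw [sb_moment2 hmeas hindep hL4 hmean Finset.univ, ← hsum]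
    exact Finset.sum_congr rfl (fun j _ => hq j)
  have hZ4 : ∫ ω, (∑ j, W j ω) ^ 4 ∂μ ≤ B + 3 := by
    have := sb_moment4 hmeas hindep hL4 hmean hB hq h4 Finset.univ
    rwa [hsum, one_pow, mul_one] at this
  have iZ2 : Integrable (fun ω => (∑ j, W j ω) ^ 2) μ :=
    sb_integrable_pow_of_memL4 (sb_sum_memL4 hL4 Finset.univ) (by norm_num)
  have iZ4 : Integrable (fun ω => (∑ j, W j ω) ^ 4) μ :=
    sb_integrable_pow_of_memL4 (sb_sum_memL4 hL4 Finset.univ) le_rfl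
  have iRHS : Integrable
      (fun ω => 1 - t * lam * (∑ j, W j ω) ^ 2 + t ^ 2 * lam ^ 2 * (∑ j, W j ω) ^ 4) μ :=
    ((integrable_const 1).sub (iZ2.const_mul _)).add (iZ4.const_mul _)
  have iLHS : Integrable (fun ω => Real.exp (-t * (lam * (∑ j, W j ω) ^ 2))) μ := by
    refine (integrable_const (1 : ℝ)).mono'
      ((((hZm.pow_const 2).const_mul lam).const_mul (-t)).exp).aestronglyMeasurable ?_
    filter_upwards with ω
    rw [Real.norm_eq_abs, abs_of_pos (Real.exp_pos _)]
    rw [show (1 : ℝ) = Real.exp 0 by simp]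
    apply Real.exp_le_exp.2
    have : 0 ≤ lam * (∑ j, W j ω) ^ 2 := mul_nonneg hlam0 (sq_nonneg _)
    nlinarith
  calc ∫ ω, Real.exp (-t * (lam * (∑ j, W j ω) ^ 2)) ∂μ
      ≤ ∫ ω, (1 - t * lam * (∑ j, W j ω) ^ 2 + t ^ 2 * lam ^ 2 * (∑ j, W j ω) ^ 4) ∂μ := by
        refine integral_mono iLHS iRHS (fun ω => ?_)
        have hu : 0 ≤ t * (lam * (∑ j, W j ω) ^ 2) :=
          mul_nonneg ht.le (mul_nonneg hlam0 (sq_nonneg _))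
        have := sb_exp_neg_le_quad hu
        calc Real.exp (-t * (lam * (∑ j, W j ω) ^ 2))
            = Real.exp (-(t * (lam * (∑ j, W j ω) ^ 2))) := by ring_nf
          _ ≤ 1 - t * (lam * (∑ j, W j ω) ^ 2) + (t * (lam * (∑ j, W j ω) ^ 2)) ^ 2 := this
          _ = 1 - t * lam * (∑ j, W j ω) ^ 2 + t ^ 2 * lam ^ 2 * (∑ j, W j ω) ^ 4 := by ring
    _ = 1 - t * lam * (∫ ω, (∑ j, W j ω) ^ 2 ∂μ)
          + t ^ 2 * lam ^ 2 * (∫ ω, (∑ j, W j ω) ^ 4 ∂μ) := by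
        have iC : Integrable (fun ω => t * lam * (∑ j, W j ω) ^ 2) μ := iZ2.const_mul _
        have iD : Integrable (fun ω => t ^ 2 * lam ^ 2 * (∑ j, W j ω) ^ 4) μ := iZ4.const_mul _
        have iA : Integrable (fun ω => 1 - t * lam * (∑ j, W j ω) ^ 2) μ :=
          (integrable_const 1).sub iC
        rw [integral_add iA iD, integral_sub (integrable_const 1) iC, integral_const_mul,
          integral_const_mul, integral_const]
        simp
    _ ≤ Real.exp (-(t * lam) / 2) := by
        rw [hZ2]
        have hexp := Real.add_one_le_exp (-(t * lam) / 2)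
        have ht2 : (0:ℝ) ≤ t ^ 2 * lam ^ 2 := by positivity
        have h1 : t ^ 2 * lam ^ 2 * (∫ ω, (∑ j, W j ω) ^ 4 ∂μ) ≤ t ^ 2 * lam ^ 2 * (B + 3) :=
          mul_le_mul_of_nonneg_left hZ4 ht2
        have h2 : t ^ 2 * lam ^ 2 * (B + 3) ≤ t * lam / 2 := by
          nlinarith [mul_nonneg ht.le hlam0, mul_nonneg (mul_nonneg ht.le ht.le) hlam0]
        nlinarith

end Moments

/-- For every `B > 0` there are `α > 0` and `η ∈ (0,1)` depending
only on `B` such that for all `m ≤ d`, every `d × m` random matrix `Y` with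
independent centered unit-variance entries with fourth moment at most `B`, every
diagonal PSD `Σ = diag(λ) ≤ I`, and every unit vector `x ∈ ℝ^m`:
`P[‖√Σ Y x‖² ≤ α (trace Σ − 1)] ≤ η^{trace Σ}`. -/
theorem small_ball_exponential_bound (B : ℝ) (hB : 0 < B) :
    ∃ α : ℝ, 0 < α ∧ ∃ η : ℝ, η ∈ Set.Ioo (0 : ℝ) 1 ∧
    ∀ (d m : ℕ), 0 < m → m ≤ d →
    ∀ (Ω : Type) (mΩ : MeasurableSpace Ω) (μ : Measure Ω), IsProbabilityMeasure μ →
    ∀ Y : Fin d → Fin m → Ω → ℝ,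
    (∀ i j, Measurable (Y i j)) →
    iIndepFun (fun p : Fin d × Fin m => Y p.1 p.2) μ →
    (∀ i j, MemLp (Y i j) 4 μ) →
    (∀ i j, ∫ ω, Y i j ω ∂μ = 0) →
    (∀ i j, ∫ ω, (Y i j ω) ^ 2 ∂μ = 1) →
    (∀ i j, ∫ ω, (Y i j ω) ^ 4 ∂μ ≤ B) →
    ∀ lam : Fin d → ℝ, (∀ i, lam i ∈ Set.Icc (0 : ℝ) 1) →
    ∀ x : Fin m → ℝ, ∑ j, (x j) ^ 2 = 1 →
      μ {ω : Ω | ∑ i, lam i * (∑ j, Y i j ω * x j) ^ 2 ≤ α * ((∑ i, lam i) - 1)} ≤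
        ENNReal.ofReal (η ^ (∑ i, lam i)) := by
  classical
  have hB3 : (0:ℝ) < B + 3 := by linarith
  set t : ℝ := 1 / (2 * (B + 3)) with htdef
  have ht : 0 < t := by positivity
  have htB : t * (B + 3) = 1 / 2 := by
    rw [htdef]; field_simp
  refine ⟨1/4, by norm_num, Real.exp (-(t/4)), ⟨Real.exp_pos _, ?_⟩, ?_⟩
  · have : -(t/4) < 0 := by linarith
    calc Real.exp (-(t/4)) < Real.exp 0 := Real.exp_lt_exp.2 this
      _ = 1 := Real.exp_zero
  intro d m hm hmd Ω mΩ μ hprob Y hYmeas hYindep hYL4 hYmean hYvar hY4 lam hlam x hx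
  set X : Fin d → Ω → ℝ := fun i ω => lam i * (∑ j, Y i j ω * x j) ^ 2 with hXdef
  have hXmeas : ∀ i, Measurable (X i) := fun i =>
    ((Finset.measurable_sum _ (fun j _ => (hYmeas i j).mul_const (x j))).pow_const 2).const_mul
      (lam i)
  have hXindep : iIndepFun X μ := by
    have h := (sb_rows_iIndep hYmeas hYindep).comp
      (fun i (v : Fin m → ℝ) => lam i * (∑ j, v j * x j) ^ 2)
      (fun i => ((Finset.measurable_sum _
        (fun j _ => (measurable_pi_apply (X := fun _ : Fin m => ℝ) j).mul_const (x j))).pow_const 2).const_mul (lam i))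
    exact h
  have hXnonneg : ∀ i ω, 0 ≤ X i ω := fun i ω =>
    mul_nonneg (hlam i).1 (sq_nonneg _)
  -- per-row mgf bound
  have hrow : ∀ i, mgf (X i) μ (-t) ≤ Real.exp (-(t * lam i) / 2) := by
    intro i
    have hWmeas : ∀ j, Measurable (fun ω => Y i j ω * x j) := fun j =>
      (hYmeas i j).mul_const (x j)
    have hWindep : iIndepFun
        (fun j ω => Y i j ω * x j) μ := by
      have h := (sb_row_iIndep hYindep i).comp (fun j (y : ℝ) => y * x j)
        (fun j => measurable_id.mul_const (x j))
      exact h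
    have hWL4 : ∀ j, MemLp (fun ω => Y i j ω * x j) 4 μ := fun j => by
      have heq : (fun ω => Y i j ω * x j) = fun ω => x j * Y i j ω := by funext ω; ring
      rw [heq]
      exact (hYL4 i j).const_mul (x j)
    have hWmean : ∀ j, ∫ ω, Y i j ω * x j ∂μ = 0 := fun j => by
      rw [integral_mul_const, hYmean i j, zero_mul]
    have hWq : ∀ j, ∫ ω, (Y i j ω * x j) ^ 2 ∂μ = (fun j => x j ^ 2) j := fun j => by
      simp_rw [mul_pow]
      rw [integral_mul_const, hYvar i j, one_mul]
    have hW4 : ∀ j, ∫ ω, (Y i j ω * x j) ^ 4 ∂μ ≤ B * ((fun j => x j ^ 2) j) ^ 2 := fun j => by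
      simp_rw [mul_pow]
      rw [integral_mul_const]
      have h1 : (x j) ^ 4 = ((x j ^ 2) ^ 2 : ℝ) := by ring
      have h2 : 0 ≤ (x j) ^ 4 := by positivity
      calc (∫ ω, Y i j ω ^ 4 ∂μ) * x j ^ 4 ≤ B * x j ^ 4 :=
            mul_le_mul_of_nonneg_right (hY4 i j) h2
        _ = B * ((x j ^ 2) ^ 2) := by ring
    have := sb_row_mgf_bound hWmeas hWindep hWL4 hWmean hB.le hWq hW4 hx ht htB.le
      (hlam i).1 (hlam i).2
    exact this
  -- Chernoff
  set T : ℝ := ∑ i, lam i with hTdef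
  have hT0 : 0 ≤ T := Finset.sum_nonneg (fun i _ => (hlam i).1)
  set ε : ℝ := 1/4 * (T - 1) with hεdef
  have hSnn : ∀ ω, 0 ≤ (∑ i, X i) ω := by
    intro ω
    rw [Finset.sum_apply]
    exact Finset.sum_nonneg (fun i _ => hXnonneg i ω)
  have hSmeas : Measurable (∑ i, X i) := by
    have : (∑ i, X i) = fun ω => ∑ i, X i ω := by ext ω; simp
    rw [this]
    exact Finset.measurable_sum _ (fun i _ => hXmeas i)
  have hint : Integrable (fun ω => Real.exp (-t * (∑ i, X i) ω)) μ := by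
    refine (integrable_const (1 : ℝ)).mono'
      ((hSmeas.const_mul (-t)).exp).aestronglyMeasurable ?_
    filter_upwards with ω
    rw [Real.norm_eq_abs, abs_of_pos (Real.exp_pos _)]
    rw [show (1 : ℝ) = Real.exp 0 by simp]
    apply Real.exp_le_exp.2
    have := hSnn ω
    nlinarith
  have hchern := measure_le_le_exp_mul_mgf (μ := μ) (X := ∑ i, X i) ε
    (neg_nonpos.mpr ht.le) hint
  have hmgfsum := hXindep.mgf_sum hXmeas (t := -t) Finset.univ
  have hprod : mgf (∑ i, X i) μ (-t) ≤ Real.exp (-(t/2) * T) := by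
    rw [hmgfsum]
    calc ∏ i, mgf (X i) μ (-t) ≤ ∏ i, Real.exp (-(t * lam i) / 2) :=
          Finset.prod_le_prod (fun i _ => mgf_nonneg) (fun i _ => hrow i)
      _ = Real.exp (∑ i, -(t * lam i) / 2) := (Real.exp_sum _ _).symm
      _ = Real.exp (-(t/2) * T) := by
          congr 1
          rw [hTdef, Finset.mul_sum]
          exact Finset.sum_congr rfl (fun i _ => by ring)
  -- combine
  have hset : {ω : Ω | ∑ i, lam i * (∑ j, Y i j ω * x j) ^ 2 ≤ (1:ℝ)/4 * ((∑ i, lam i) - 1)}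
      = {ω : Ω | (∑ i, X i) ω ≤ ε} := by
    ext ω
    simp only [Set.mem_setOf_eq, Finset.sum_apply, hXdef, hεdef, hTdef]
  have hbound : (μ {ω : Ω | (∑ i, X i) ω ≤ ε}).toReal ≤ Real.exp (-(t/4)) ^ T := by
    have hmul : Real.exp (- -t * ε) * mgf (∑ i, X i) μ (-t)
        ≤ Real.exp (t * ε) * Real.exp (-(t/2) * T) := by
      rw [neg_neg]
      exact mul_le_mul_of_nonneg_left hprod (Real.exp_pos _).le
    have hpow : Real.exp (-(t/4)) ^ T = Real.exp (-(t/4) * T) := by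
      rw [Real.rpow_def_of_pos (Real.exp_pos _), Real.log_exp]
    have hexpineq : Real.exp (t * ε) * Real.exp (-(t/2) * T) ≤ Real.exp (-(t/4) * T) := by
      rw [← Real.exp_add]
      apply Real.exp_le_exp.2
      rw [hεdef]
      nlinarith [ht.le, hT0]
    rw [hpow]
    exact le_trans hchern (le_trans hmul hexpineq)
  rw [hset]
  have hne : μ {ω : Ω | (∑ i, X i) ω ≤ ε} ≠ ⊤ := measure_ne_top μ _
  rw [← ENNReal.ofReal_toReal hne]
  exact ENNReal.ofReal_le_ofReal hbound
end

section
/- Let X ∈ ℝ^d be a random vector and let B be a d×d positive semidefinite matrix such that for every u ∈ ℝ^d, E[exp(⟨u, X⟩)] ≤ exp(⟨B u, u⟩/2). Then for every t with 0 < t ≤ 1/(4·λ₁(B)), where λ₁(B) is the largest eigenvalue of B, one has E[exp(t·‖X‖₂²)] ≤ exp(2t·trace(B)). -/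
open MeasureTheory Matrix Real

lemma gauss_key (d : ℕ) (b c : Fin d → ℝ) (v : Fin d → ℝ) :
    Complex.exp (-∑ i, (b i : ℂ) * (v i : ℂ) ^ 2 + ∑ i, (c i : ℂ) * (v i : ℂ))
      = ((rexp (∑ i, (c i * v i - b i * v i ^ 2)) : ℝ) : ℂ) := by
  rw [Complex.ofReal_exp]
  congr 1
  rw [Finset.sum_sub_distrib]
  push_cast
  ring

lemma gauss_integrable (d : ℕ) (b c : Fin d → ℝ) (hb : ∀ i, 0 < b i) :
    Integrable (fun v : Fin d → ℝ => rexp (∑ i, (c i * v i - b i * v i ^ 2))) := by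
  have h := (GaussianFourier.integrable_cexp_neg_sum_mul_add (b := fun i => (b i : ℂ))
    (fun i => by simpa using hb i) (fun i => (c i : ℂ))).re
  refine h.congr (Filter.Eventually.of_forall fun v => ?_)
  simp only [RCLike.re_to_complex, gauss_key d b c v, Complex.ofReal_re]

lemma gauss_integral (d : ℕ) (b c : Fin d → ℝ) (hb : ∀ i, 0 < b i) :
    ∫ v : Fin d → ℝ, rexp (∑ i, (c i * v i - b i * v i ^ 2))
      = ∏ i, (√(π / b i) * rexp (c i ^ 2 / (4 * b i))) := by
  have h := GaussianFourier.integral_cexp_neg_sum_mul_add (b := fun i => (b i : ℂ))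
    (fun i => by simpa using hb i) (fun i => (c i : ℂ))
  simp_rw [gauss_key d b c] at h
  have coe_int : ∫ v : Fin d → ℝ, ((rexp (∑ i, (c i * v i - b i * v i ^ 2)) : ℝ) : ℂ)
      = ((∫ v : Fin d → ℝ, rexp (∑ i, (c i * v i - b i * v i ^ 2)) : ℝ) : ℂ) :=
    integral_ofReal
  rw [coe_int] at h
  have hr : ∀ i : Fin d, ((π : ℂ) / (b i : ℂ)) ^ (1 / 2 : ℂ)
        * Complex.exp ((c i : ℂ) ^ 2 / (4 * (b i : ℂ)))
      = ((√(π / b i) * rexp (c i ^ 2 / (4 * b i)) : ℝ) : ℂ) := by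
    intro i
    rw [Complex.ofReal_mul, Complex.ofReal_exp, Real.sqrt_eq_rpow,
      Complex.ofReal_cpow (div_nonneg Real.pi_pos.le (hb i).le)]
    push_cast
    norm_num
  simp_rw [hr, ← Complex.ofReal_prod] at h
  exact_mod_cast h

lemma gauss_lintegral (d : ℕ) (b c : Fin d → ℝ) (hb : ∀ i, 0 < b i) :
    ∫⁻ v : Fin d → ℝ, ENNReal.ofReal (rexp (∑ i, (c i * v i - b i * v i ^ 2)))
      = ENNReal.ofReal (∏ i, (√(π / b i) * rexp (c i ^ 2 / (4 * b i)))) := by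
  rw [← ofReal_integral_eq_lintegral_ofReal (gauss_integrable d b c hb)
    (Filter.Eventually.of_forall fun v => (Real.exp_pos _).le), gauss_integral d b c hb]

/-- If `X ∈ ℝ^d` is a random vector and `B` is a PSD matrix with
`E[exp⟨u,X⟩] ≤ exp(⟨Bu,u⟩/2)` for all `u`, then for `0 < t ≤ 1/(4λ₁(B))`
(equivalently `t · λᵢ(B) ≤ 1/4` for every eigenvalue), one has
`E[exp(t‖X‖²)] ≤ exp(2t · trace B)`. -/
theorem mgf_norm_sq_of_subgaussian_vector
    (d : ℕ) (Ω : Type*) [MeasurableSpace Ω] (μ : Measure Ω) [IsProbabilityMeasure μ]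
    (X : Ω → Fin d → ℝ) (hmeas : ∀ i, Measurable fun ω => X ω i)
    (B : Matrix (Fin d) (Fin d) ℝ) (hB : B.PosSemidef)
    (hmgf : ∀ u : Fin d → ℝ,
      ∫⁻ ω, ENNReal.ofReal (Real.exp (∑ i, u i * X ω i)) ∂μ ≤
        ENNReal.ofReal (Real.exp ((u ⬝ᵥ B.mulVec u) / 2)))
    (t : ℝ) (ht : 0 < t)
    (htB : ∀ i : Fin d, t * hB.1.eigenvalues i ≤ 1 / 4) :
    ∫⁻ ω, ENNReal.ofReal (Real.exp (t * ∑ i, (X ω i) ^ 2)) ∂μ ≤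
      ENNReal.ofReal (Real.exp (2 * t * B.trace)) := by
  classical
  set lam : Fin d → ℝ := hB.1.eigenvalues with hlam_def
  set U : Matrix (Fin d) (Fin d) ℝ := (hB.1.eigenvectorUnitary : Matrix (Fin d) (Fin d) ℝ)
    with hU_def
  have hUU : star U * U = 1 := Matrix.mem_unitaryGroup_iff'.mp hB.1.eigenvectorUnitary.2
  have hUU' : U * star U = 1 := Matrix.mem_unitaryGroup_iff.mp hB.1.eigenvectorUnitary.2
  have hdiag : star U * B * U = Matrix.diagonal lam := by
    simpa [Unitary.conjStarAlgAut_star_apply] using hB.1.conjStarAlgAut_star_eigenvectorUnitary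
  have hlam0 : ∀ i, 0 ≤ lam i := fun i => hB.eigenvalues_nonneg i
  -- c x = coefficient vector
  set c : (Fin d → ℝ) → Fin d → ℝ := fun x => Matrix.vecMul x U with hc_def
  have fact1 : ∀ x : Fin d → ℝ, ∑ i, c x i ^ 2 = ∑ i, x i ^ 2 := by
    intro x
    have h1 : ∑ i, c x i ^ 2 = c x ⬝ᵥ c x := by simp [dotProduct, sq]
    have h2 : ∑ i, x i ^ 2 = x ⬝ᵥ x := by simp [dotProduct, sq]
    rw [h1, h2, hc_def]
    calc Matrix.vecMul x U ⬝ᵥ Matrix.vecMul x U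
        = x ⬝ᵥ U *ᵥ Matrix.vecMul x U := (Matrix.dotProduct_mulVec x U _).symm
      _ = x ⬝ᵥ U *ᵥ (star U *ᵥ x) := by rw [← Matrix.mulVec_transpose, Matrix.star_eq_conjTranspose, Matrix.conjTranspose_eq_transpose_of_trivial]
      _ = x ⬝ᵥ (U * star U) *ᵥ x := by rw [Matrix.mulVec_mulVec]
      _ = x ⬝ᵥ x := by rw [hUU', Matrix.one_mulVec]
  have fact2 : ∀ (v x : Fin d → ℝ), ∑ i, (U *ᵥ v) i * x i = ∑ i, c x i * v i := by
    intro v x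
    have : (U *ᵥ v) ⬝ᵥ x = c x ⬝ᵥ v := by
      rw [dotProduct_comm, Matrix.dotProduct_mulVec]
    simpa [dotProduct] using this
  have fact3 : ∀ v : Fin d → ℝ, (U *ᵥ v) ⬝ᵥ B *ᵥ (U *ᵥ v) = ∑ i, lam i * v i ^ 2 := by
    intro v
    calc (U *ᵥ v) ⬝ᵥ B *ᵥ (U *ᵥ v)
        = (U *ᵥ v) ⬝ᵥ (B * U) *ᵥ v := by rw [Matrix.mulVec_mulVec]
      _ = ((B * U) *ᵥ v) ⬝ᵥ (U *ᵥ v) := dotProduct_comm _ _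
      _ = Matrix.vecMul ((B * U) *ᵥ v) U ⬝ᵥ v := Matrix.dotProduct_mulVec _ _ _
      _ = (star U *ᵥ ((B * U) *ᵥ v)) ⬝ᵥ v := by
          rw [← Matrix.mulVec_transpose, Matrix.star_eq_conjTranspose,
            Matrix.conjTranspose_eq_transpose_of_trivial]
      _ = ((star U * (B * U)) *ᵥ v) ⬝ᵥ v := by rw [Matrix.mulVec_mulVec]
      _ = (Matrix.diagonal lam *ᵥ v) ⬝ᵥ v := by rw [← mul_assoc, hdiag]
      _ = ∑ i, lam i * v i ^ 2 := by
          refine Finset.sum_congr rfl fun i _ => ?_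
          simp [Matrix.mulVec_diagonal]
          ring
  have fact4 : B.trace = ∑ i, lam i := by
    have h1 : (star U * B * U).trace = B.trace := by
      rw [Matrix.trace_mul_cycle, hUU', one_mul]
    rw [← h1, hdiag, Matrix.trace_diagonal]
  -- numeric setup
  set b0 : Fin d → ℝ := fun _ => 1 / (4 * t) with hb0_def
  have hb0 : ∀ i : Fin d, 0 < b0 i := fun i => by positivity
  set b1 : Fin d → ℝ := fun i => 1 / (4 * t) - lam i / 2 with hb1_def
  have hb1 : ∀ i, 0 < b1 i := by
    intro i
    have h := htB i
    have hpos : 0 < 1 / (4 * t) := by positivity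
    have h2 : lam i ≤ 1 / (4 * t) := by
      rw [le_div_iff₀ (by positivity)]
      linarith [htB i]
    simp only [hb1_def]
    linarith
  set K : ℝ := ∏ i, √(π / b0 i) with hK_def
  have hKpos : 0 < K := Finset.prod_pos fun i _ => Real.sqrt_pos.mpr (by positivity)
  -- step 1 : Gaussian representation of exp(t‖x‖²)
  have key1 : ∀ x : Fin d → ℝ,
      ∫⁻ v : Fin d → ℝ, ENNReal.ofReal (rexp (∑ i, (c x i * v i - b0 i * v i ^ 2)))
        = ENNReal.ofReal (rexp (t * ∑ i, x i ^ 2)) * ENNReal.ofReal K := by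
    intro x
    rw [gauss_lintegral d b0 (c x) hb0, ← ENNReal.ofReal_mul (Real.exp_pos _).le]
    congr 1
    have hsum : ∑ i, c x i ^ 2 / (4 * b0 i) = t * ∑ i, x i ^ 2 := by
      rw [← fact1 x, Finset.mul_sum]
      refine Finset.sum_congr rfl fun i _ => ?_
      simp only [hb0_def]
      field_simp
    calc ∏ i, (√(π / b0 i) * rexp (c x i ^ 2 / (4 * b0 i)))
        = (∏ i, √(π / b0 i)) * ∏ i, rexp (c x i ^ 2 / (4 * b0 i)) :=
          Finset.prod_mul_distrib
      _ = K * rexp (∑ i, c x i ^ 2 / (4 * b0 i)) := by rw [← Real.exp_sum, hK_def]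
      _ = rexp (t * ∑ i, x i ^ 2) * K := by rw [hsum, mul_comm]
  -- measurability for Tonelli
  have hm : Measurable (fun p : Ω × (Fin d → ℝ) =>
      ∑ i, (c (X p.1) i * p.2 i - b0 i * p.2 i ^ 2)) := by
    apply Finset.measurable_sum
    intro i _
    have h1 : Measurable fun p : Ω × (Fin d → ℝ) => c (X p.1) i := by
      have heq : (fun p : Ω × (Fin d → ℝ) => c (X p.1) i)
          = fun p => ∑ j, X p.1 j * U j i := by
        funext p
        simp [hc_def, Matrix.vecMul, dotProduct]
      rw [heq]
      exact Finset.measurable_sum _ fun j _ =>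
        ((hmeas j).comp measurable_fst).mul measurable_const
    have h2 : Measurable fun p : Ω × (Fin d → ℝ) => p.2 i :=
      (measurable_pi_apply i).comp measurable_snd
    exact (h1.mul h2).sub (measurable_const.mul (h2.pow measurable_const))
  have hmprod : AEMeasurable (Function.uncurry fun (ω : Ω) (v : Fin d → ℝ) =>
      ENNReal.ofReal (rexp (∑ i, (c (X ω) i * v i - b0 i * v i ^ 2)))) (μ.prod volume) :=
    (ENNReal.measurable_ofReal.comp (Real.measurable_exp.comp hm)).aemeasurable
  -- main estimate
  have main : (∫⁻ ω, ENNReal.ofReal (rexp (t * ∑ i, (X ω i) ^ 2)) ∂μ) * ENNReal.ofReal K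
      ≤ ENNReal.ofReal (∏ i, √(π / b1 i)) := by
    calc (∫⁻ ω, ENNReal.ofReal (rexp (t * ∑ i, (X ω i) ^ 2)) ∂μ) * ENNReal.ofReal K
        = ∫⁻ ω, ENNReal.ofReal (rexp (t * ∑ i, (X ω i) ^ 2)) * ENNReal.ofReal K ∂μ :=
          (lintegral_mul_const' _ _ ENNReal.ofReal_ne_top).symm
      _ = ∫⁻ ω, (∫⁻ v : Fin d → ℝ,
            ENNReal.ofReal (rexp (∑ i, (c (X ω) i * v i - b0 i * v i ^ 2))) ∂volume) ∂μ := by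
          refine lintegral_congr fun ω => (key1 (X ω)).symm
      _ = ∫⁻ v : Fin d → ℝ, ∫⁻ ω,
            ENNReal.ofReal (rexp (∑ i, (c (X ω) i * v i - b0 i * v i ^ 2))) ∂μ ∂volume :=
          lintegral_lintegral_swap hmprod
      _ ≤ ∫⁻ v : Fin d → ℝ,
            ENNReal.ofReal (rexp (∑ i, ((fun _ : Fin d => (0:ℝ)) i * v i - b1 i * v i ^ 2))) := by
          refine lintegral_mono fun v => ?_
          have hsplit : ∀ ω, ENNReal.ofReal (rexp (∑ i, (c (X ω) i * v i - b0 i * v i ^ 2)))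
              = ENNReal.ofReal (rexp (∑ i, (U *ᵥ v) i * X ω i))
                * ENNReal.ofReal (rexp (-∑ i, b0 i * v i ^ 2)) := by
            intro ω
            rw [← ENNReal.ofReal_mul (Real.exp_pos _).le, ← Real.exp_add]
            congr 2
            rw [Finset.sum_sub_distrib, fact2 v (X ω), sub_eq_add_neg]
          calc ∫⁻ ω, ENNReal.ofReal (rexp (∑ i, (c (X ω) i * v i - b0 i * v i ^ 2))) ∂μ
              = (∫⁻ ω, ENNReal.ofReal (rexp (∑ i, (U *ᵥ v) i * X ω i)) ∂μ)
                  * ENNReal.ofReal (rexp (-∑ i, b0 i * v i ^ 2)) := by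
                simp_rw [hsplit]
                exact lintegral_mul_const' _ _ ENNReal.ofReal_ne_top
            _ ≤ ENNReal.ofReal (rexp (((U *ᵥ v) ⬝ᵥ B *ᵥ (U *ᵥ v)) / 2))
                  * ENNReal.ofReal (rexp (-∑ i, b0 i * v i ^ 2)) :=
                mul_le_mul_left (hmgf (U *ᵥ v)) _
            _ = ENNReal.ofReal (rexp (∑ i, ((fun _ : Fin d => (0:ℝ)) i * v i - b1 i * v i ^ 2))) := by
                rw [fact3 v, ← ENNReal.ofReal_mul (Real.exp_pos _).le, ← Real.exp_add]
                congr 2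
                have hterm : ∀ i : Fin d, (fun _ : Fin d => (0:ℝ)) i * v i - b1 i * v i ^ 2
                    = lam i * v i ^ 2 / 2 - b0 i * v i ^ 2 := by
                  intro i
                  simp only [hb1_def, hb0_def]
                  ring
                rw [Finset.sum_congr rfl fun i _ => hterm i, Finset.sum_sub_distrib,
                  ← Finset.sum_div]
                ring
      _ = ENNReal.ofReal (∏ i, (√(π / b1 i)
            * rexp ((fun _ : Fin d => (0:ℝ)) i ^ 2 / (4 * b1 i)))) :=
          gauss_lintegral d b1 (fun _ => 0) hb1
      _ = ENNReal.ofReal (∏ i, √(π / b1 i)) := by norm_num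
  -- final real estimate
  have step : ∀ i : Fin d, √(π / b1 i) ≤ rexp (2 * t * lam i) * √(π / b0 i) := by
    intro i
    set x : ℝ := 2 * t * lam i with hx_def
    have hx0 : 0 ≤ x := by
      rw [hx_def]
      exact mul_nonneg (by positivity) (hlam0 i)
    have hx12 : x ≤ 1 / 2 := by
      have := htB i
      simp only [hx_def]
      linarith
    have h1x : 0 < 1 - x := by linarith
    have hb1b0 : b1 i = b0 i * (1 - x) := by
      simp only [hb1_def, hb0_def, hx_def]
      field_simp
      ring
    have hexp : 1 / (1 - x) ≤ rexp (2 * x) := by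
      have h3 : x / (1 - x) ≤ 2 * x := by
        rw [div_le_iff₀ h1x]
        nlinarith
      have h4 : 1 / (1 - x) = x / (1 - x) + 1 := by field_simp; ring
      calc 1 / (1 - x) = x / (1 - x) + 1 := h4
        _ ≤ rexp (x / (1 - x)) := Real.add_one_le_exp _
        _ ≤ rexp (2 * x) := Real.exp_le_exp.mpr h3
    have hsq : √(1 / (1 - x)) ≤ rexp x := by
      have := Real.sqrt_le_sqrt hexp
      rwa [show rexp (2 * x) = rexp x ^ 2 by rw [pow_two, ← Real.exp_add]; ring_nf,
        Real.sqrt_sq (Real.exp_pos _).le] at this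
    have hdecomp : π / b1 i = (π / b0 i) * (1 / (1 - x)) := by
      rw [hb1b0]
      field_simp
    rw [hdecomp, Real.sqrt_mul (by positivity)]
    rw [mul_comm (rexp (2 * t * lam i)) (√(π / b0 i))]
    exact mul_le_mul_of_nonneg_left (by simpa [hx_def] using hsq) (Real.sqrt_nonneg _)
  have final_real : ∏ i, √(π / b1 i) ≤ rexp (2 * t * B.trace) * K := by
    calc ∏ i, √(π / b1 i)
        ≤ ∏ i, (rexp (2 * t * lam i) * √(π / b0 i)) :=
          Finset.prod_le_prod (fun i _ => Real.sqrt_nonneg _) (fun i _ => step i)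
      _ = rexp (∑ i, 2 * t * lam i) * K := by
          rw [Finset.prod_mul_distrib, Real.exp_sum, hK_def]
      _ = rexp (2 * t * B.trace) * K := by
          rw [fact4, Finset.mul_sum]
  have hfin := main.trans (ENNReal.ofReal_le_ofReal final_real)
  rw [ENNReal.ofReal_mul (Real.exp_pos _).le] at hfin
  exact (ENNReal.mul_le_mul_iff_left (by simp [hKpos]) ENNReal.ofReal_ne_top).mp hfin
end

section
/- Let m ≤ d be positive integers, let Y be a d×m random matrix with independent entries, each sub-Gaussian with moment B, let Σ be a d×d diagonal positive semidefinite matrix with Σ ≤ I_d, and let x ∈ ℝ^m be a unit vector. Then for every z ≥ 0, P[‖√Σ · Y x‖₂ ≥ z] ≤ exp(trace(Σ)/2 − z²/(4B²)). -/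
open MeasureTheory ProbabilityTheory

lemma group_lintegral_prod {Ω ι κ : Type*} [DecidableEq ι] [DecidableEq κ]
    [MeasurableSpace Ω] {μ : Measure Ω}
    [IsProbabilityMeasure μ] (X : ι → Ω → ℝ)
    (hX : iIndepFun X μ) (hm : ∀ i, Measurable (X i))
    (T : κ → Finset ι) (F : ∀ k, ({i // i ∈ T k} → ℝ) → ENNReal)
    (hF : ∀ k, Measurable (F k)) (s : Finset κ)
    (hd : (s : Set κ).PairwiseDisjoint T) :
    ∫⁻ ω, ∏ k ∈ s, F k (fun i => X i.1 ω) ∂μ = ∏ k ∈ s, ∫⁻ ω, F k (fun i => X i.1 ω) ∂μ := by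
  classical
  revert hd
  refine Finset.induction_on s ?_ ?_
  · intro _; simp
  · intro a s ha ih hd
    have hd' : (s : Set κ).PairwiseDisjoint T :=
      hd.subset (by intro k hk; simp [hk])
    have hdis : Disjoint (T a) (s.biUnion T) := by
      rw [Finset.disjoint_biUnion_right]
      intro k hk
      exact hd (by simp) (by simp [hk]) (fun h => ha (h ▸ hk))
    have h1 := hX.indepFun_finset (T a) (s.biUnion T) hdis hm
    set ψ : ({i // i ∈ s.biUnion T} → ℝ) → ENNReal :=
      fun v => ∏ k ∈ s.attach, F k (fun i => v ⟨i.1, Finset.mem_biUnion.2 ⟨k.1, k.2, i.2⟩⟩)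
      with hψ
    have hψm : Measurable ψ := by
      apply Finset.measurable_prod
      intro k _
      exact (hF k.1).comp (measurable_pi_lambda _ fun i => measurable_pi_apply _)
    have hcomp : (fun ω => ψ (fun i : {i // i ∈ s.biUnion T} => X i.1 ω))
        = fun ω => ∏ k ∈ s, F k (fun i => X i.1 ω) := by
      funext ω
      rw [hψ]
      rw [← Finset.prod_attach s (fun k => F k (fun i : {i // i ∈ T k} => X i.1 ω))]
    have hma : Measurable (fun ω => F a (fun i : {i // i ∈ T a} => X i.1 ω)) :=
      (hF a).comp (measurable_pi_lambda _ fun i => hm i.1)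
    have hmp : Measurable (fun ω => ∏ k ∈ s, F k (fun i : {i // i ∈ T k} => X i.1 ω)) := by
      apply Finset.measurable_prod
      intro k _
      exact (hF k).comp (measurable_pi_lambda _ fun i => hm i.1)
    have h2 : IndepFun (fun ω => F a (fun i : {i // i ∈ T a} => X i.1 ω))
        (fun ω => ∏ k ∈ s, F k (fun i : {i // i ∈ T k} => X i.1 ω)) μ := by
      have h2' := h1.comp (hF a) hψm
      simp only [Function.comp_def] at h2'
      rwa [hcomp] at h2'
    rw [Finset.prod_insert ha]
    calc ∫⁻ ω, ∏ k ∈ insert a s, F k (fun i => X i.1 ω) ∂μ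
        = ∫⁻ ω, (F a (fun i : {i // i ∈ T a} => X i.1 ω))
            * ∏ k ∈ s, F k (fun i : {i // i ∈ T k} => X i.1 ω) ∂μ := by
          simp_rw [Finset.prod_insert ha]
      _ = (∫⁻ ω, F a (fun i : {i // i ∈ T a} => X i.1 ω) ∂μ)
            * ∫⁻ ω, ∏ k ∈ s, F k (fun i : {i // i ∈ T k} => X i.1 ω) ∂μ :=
          lintegral_mul_eq_lintegral_mul_lintegral_of_indepFun'' hma.aemeasurable
            hmp.aemeasurable h2
      _ = _ := by rw [ih hd']


lemma subgaussian_sq_bound {Ω : Type*} [MeasurableSpace Ω] (μ : Measure Ω)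
    [IsProbabilityMeasure μ] (B : ℝ) (hB : 0 < B) (V : Ω → ℝ) (hV : Measurable V)
    (hs : ∀ s : ℝ, ∫⁻ ω, ENNReal.ofReal (Real.exp (s * V ω)) ∂μ ≤
      ENNReal.ofReal (Real.exp (B ^ 2 * s ^ 2 / 2)))
    (c : ℝ) (hc0 : 0 ≤ c) (hc1 : c ≤ 1) :
    ∫⁻ ω, ENNReal.ofReal (Real.exp (c * (V ω) ^ 2 / (4 * B ^ 2))) ∂μ ≤
      ENNReal.ofReal (Real.exp (c / 2)) := by
  rcases eq_or_lt_of_le hc0 with rfl | hc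
  · simp [lintegral_const, ENNReal.ofReal_le_ofReal (Real.exp_le_exp.2 (by norm_num : (0:ℝ) ≤ 0/2))]
  set t : ℝ := c / (4 * B ^ 2) with htdef
  have ht : 0 < t := by positivity
  set b : ℝ := Real.sqrt (2 * t) with hbdef
  have hb2 : b ^ 2 = 2 * t := Real.sq_sqrt (by positivity)
  have hBt : B ^ 2 * t = c / 4 := by rw [htdef]; field_simp
  set a : ℝ := (2 - c) / 4 with hadef
  have ha : 0 < a := by rw [hadef]; linarith
  -- step 1 : gaussian identity
  have step1 : ∀ v : ℝ, ∫⁻ u : ℝ, ENNReal.ofReal (Real.exp (b * v * u - u ^ 2 / 2)) =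
      ENNReal.ofReal (Real.exp (t * v ^ 2) * Real.sqrt (2 * Real.pi)) := by
    intro v
    have hpt : ∀ u : ℝ, Real.exp (b * v * u - u ^ 2 / 2)
        = Real.exp (t * v ^ 2) * Real.exp (-(1/2) * (u - b * v) ^ 2) := by
      intro u
      rw [← Real.exp_add]
      congr 1
      linear_combination (v^2/2) * hb2
    have hint0 : Integrable (fun u : ℝ => Real.exp (-(1/2 : ℝ) * u ^ 2)) :=
      integrable_exp_neg_mul_sq (by norm_num)
    have hint1 : Integrable (fun u : ℝ => Real.exp (-(1/2 : ℝ) * (u - b * v) ^ 2)) :=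
      hint0.comp_sub_right (b * v)
    have hint : Integrable (fun u : ℝ => Real.exp (b * v * u - u ^ 2 / 2)) := by
      simp_rw [hpt]; exact hint1.const_mul _
    rw [← ofReal_integral_eq_lintegral_ofReal hint
      (Filter.Eventually.of_forall fun u => (Real.exp_pos _).le)]
    congr 1
    calc ∫ u : ℝ, Real.exp (b * v * u - u ^ 2 / 2)
        = ∫ u : ℝ, Real.exp (t * v ^ 2) * Real.exp (-(1/2 : ℝ) * (u - b * v) ^ 2) := by
          simp_rw [hpt]
      _ = Real.exp (t * v ^ 2) * ∫ u : ℝ, Real.exp (-(1/2 : ℝ) * (u - b * v) ^ 2) :=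
          integral_const_mul _ _
      _ = Real.exp (t * v ^ 2) * ∫ u : ℝ, Real.exp (-(1/2 : ℝ) * u ^ 2) := by
          rw [integral_sub_right_eq_self (fun u : ℝ => Real.exp (-(1/2 : ℝ) * u ^ 2)) (b * v)]
      _ = Real.exp (t * v ^ 2) * Real.sqrt (2 * Real.pi) := by
          rw [integral_gaussian]; norm_num; ring
  set K : ENNReal := ENNReal.ofReal (Real.sqrt (2 * Real.pi)) with hKdef
  have hsqrtpos : 0 < Real.sqrt (2 * Real.pi) := Real.sqrt_pos.2 (by linarith [Real.pi_pos])
  have hK0 : K ≠ 0 := by rw [hKdef]; exact (ENNReal.ofReal_pos.2 hsqrtpos).ne'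
  have hKtop : K ≠ ⊤ := ENNReal.ofReal_ne_top
  have hmeasV : Measurable fun ω => ENNReal.ofReal (Real.exp (t * V ω ^ 2)) :=
    ((measurable_const.mul (hV.pow_const 2)).exp).ennreal_ofReal
  have hmeas2 : Measurable fun p : Ω × ℝ =>
      ENNReal.ofReal (Real.exp (b * V p.1 * p.2 - p.2 ^ 2 / 2)) := by
    exact (((measurable_const.mul (hV.comp measurable_fst)).mul measurable_snd).sub
      ((measurable_snd.pow_const 2).div_const 2)).exp.ennreal_ofReal
  have hKmul : K * ∫⁻ ω, ENNReal.ofReal (Real.exp (t * (V ω) ^ 2)) ∂μ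
      = ∫⁻ u : ℝ, ∫⁻ ω, ENNReal.ofReal (Real.exp (b * V ω * u - u ^ 2 / 2)) ∂μ := by
    rw [← lintegral_const_mul K hmeasV]
    rw [← lintegral_lintegral_swap hmeas2.aemeasurable]
    congr 1
    funext ω
    rw [step1 (V ω), hKdef, ← ENNReal.ofReal_mul hsqrtpos.le]
    congr 1
    ring
  have inner_le : ∀ u : ℝ, ∫⁻ ω, ENNReal.ofReal (Real.exp (b * V ω * u - u ^ 2 / 2)) ∂μ
      ≤ ENNReal.ofReal (Real.exp (-a * u ^ 2)) := by
    intro u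
    have hpt : ∀ ω, ENNReal.ofReal (Real.exp (b * V ω * u - u ^ 2 / 2))
        = ENNReal.ofReal (Real.exp ((b * u) * V ω)) * ENNReal.ofReal (Real.exp (-(u ^ 2 / 2))) := by
      intro ω
      rw [← ENNReal.ofReal_mul (Real.exp_pos _).le, ← Real.exp_add]
      congr 2
      ring
    simp_rw [hpt]
    rw [lintegral_mul_const _ ((hV.const_mul (b * u)).exp.ennreal_ofReal)]
    calc (∫⁻ ω, ENNReal.ofReal (Real.exp ((b * u) * V ω)) ∂μ)
          * ENNReal.ofReal (Real.exp (-(u ^ 2 / 2)))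
        ≤ ENNReal.ofReal (Real.exp (B ^ 2 * (b * u) ^ 2 / 2))
          * ENNReal.ofReal (Real.exp (-(u ^ 2 / 2))) :=
          mul_le_mul_left (hs (b * u)) _
      _ = ENNReal.ofReal (Real.exp (-a * u ^ 2)) := by
          rw [← ENNReal.ofReal_mul (Real.exp_pos _).le, ← Real.exp_add]
          congr 2
          have : B ^ 2 * (b * u) ^ 2 / 2 = c / 4 * u ^ 2 := by
            linear_combination (u^2 * B^2 / 2) * hb2 + u^2 * hBt
          rw [this, hadef]
          ring
  have total : K * ∫⁻ ω, ENNReal.ofReal (Real.exp (t * (V ω) ^ 2)) ∂μ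
      ≤ ENNReal.ofReal (Real.sqrt (Real.pi / a)) := by
    rw [hKmul]
    refine le_trans (lintegral_mono inner_le) ?_
    rw [← ofReal_integral_eq_lintegral_ofReal (integrable_exp_neg_mul_sq ha)
      (Filter.Eventually.of_forall fun u => (Real.exp_pos _).le)]
    rw [integral_gaussian]
  have hgoal : ∫⁻ ω, ENNReal.ofReal (Real.exp (t * (V ω) ^ 2)) ∂μ
      ≤ ENNReal.ofReal (Real.exp (c / 2)) := by
    have hdiv : ∫⁻ ω, ENNReal.ofReal (Real.exp (t * (V ω) ^ 2)) ∂μ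
        ≤ ENNReal.ofReal (Real.sqrt (Real.pi / a)) / K := by
      rw [ENNReal.le_div_iff_mul_le (Or.inl hK0) (Or.inl hKtop), mul_comm]
      exact total
    refine le_trans hdiv ?_
    rw [hKdef, ← ENNReal.ofReal_div_of_pos hsqrtpos]
    apply ENNReal.ofReal_le_ofReal
    have h2a : Real.sqrt (Real.pi / a) / Real.sqrt (2 * Real.pi)
        = Real.sqrt (1 / (2 * a)) := by
      rw [← Real.sqrt_div (by positivity : (0:ℝ) ≤ Real.pi / a)]
      congr 1
      have hpi := Real.pi_pos
      field_simp
    rw [h2a]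
    have hexp : (1 : ℝ) + c ≤ Real.exp c := by linarith [Real.add_one_le_exp c]
    have h1 : 1 / (2 * a) ≤ Real.exp c := by
      rw [hadef]
      rw [div_le_iff₀ (by linarith)]
      nlinarith
    calc Real.sqrt (1 / (2 * a)) ≤ Real.sqrt (Real.exp c) := Real.sqrt_le_sqrt h1
      _ = Real.exp (c / 2) := by
          rw [show Real.exp c = Real.exp (c / 2) ^ 2 by
            rw [sq, ← Real.exp_add]; ring_nf]
          exact Real.sqrt_sq (Real.exp_pos _).le
  calc ∫⁻ ω, ENNReal.ofReal (Real.exp (c * (V ω) ^ 2 / (4 * B ^ 2))) ∂μ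
      = ∫⁻ ω, ENNReal.ofReal (Real.exp (t * (V ω) ^ 2)) ∂μ := by
        congr 1; funext ω; rw [htdef]; congr 2; ring
    _ ≤ ENNReal.ofReal (Real.exp (c / 2)) := hgoal

set_option maxHeartbeats 2000000 in
/-- If `Y` is a `d × m` random matrix (`m ≤ d`) with independent
entries, each sub-Gaussian with moment `B`, `Σ = diag(λ)` diagonal PSD with
`Σ ≤ I`, and `x ∈ ℝ^m` a unit vector, then for all `z ≥ 0`,
`P[‖√Σ Y x‖ ≥ z] ≤ exp(trace(Σ)/2 − z²/(4B²))`. -/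
theorem vector_tail_bound_subgaussian
    (d m : ℕ) (hm : 0 < m) (hmd : m ≤ d) (B : ℝ) (hB : 0 < B)
    (Ω : Type*) [MeasurableSpace Ω] (μ : Measure Ω) [IsProbabilityMeasure μ]
    (Y : Fin d → Fin m → Ω → ℝ)
    (hmeas : ∀ i j, Measurable (Y i j))
    (hindep : iIndepFun (fun p : Fin d × Fin m => Y p.1 p.2) μ)
    (hsub : ∀ i j (s : ℝ), ∫⁻ ω, ENNReal.ofReal (Real.exp (s * Y i j ω)) ∂μ ≤
      ENNReal.ofReal (Real.exp (B ^ 2 * s ^ 2 / 2)))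
    (lam : Fin d → ℝ) (hlam : ∀ i, lam i ∈ Set.Icc (0 : ℝ) 1)
    (x : Fin m → ℝ) (hx : ∑ j, (x j) ^ 2 = 1)
    (z : ℝ) (hz : 0 ≤ z) :
    μ {ω : Ω | z ≤ Real.sqrt (∑ i, lam i * (∑ j, Y i j ω * x j) ^ 2)} ≤
      ENNReal.ofReal (Real.exp ((∑ i, lam i) / 2 - z ^ 2 / (4 * B ^ 2))) := by
  classical
  set X : Fin d × Fin m → Ω → ℝ := fun p => Y p.1 p.2 with hXdef
  have hXm : ∀ p, Measurable (X p) := fun p => hmeas p.1 p.2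
  set V : Fin d → Ω → ℝ := fun i ω => ∑ j, Y i j ω * x j with hVdef
  have hVmeas : ∀ i, Measurable (V i) :=
    fun i => Finset.measurable_sum _ fun j _ => (hmeas i j).mul_const _
  -- Row sums are sub-Gaussian with moment B
  have hrow : ∀ i (s : ℝ), ∫⁻ ω, ENNReal.ofReal (Real.exp (s * V i ω)) ∂μ ≤
      ENNReal.ofReal (Real.exp (B ^ 2 * s ^ 2 / 2)) := by
    intro i s
    set T : Fin m → Finset (Fin d × Fin m) := fun j => {(i, j)} with hTdef
    set F : ∀ j : Fin m, ({p // p ∈ T j} → ℝ) → ENNReal :=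
      fun j v => ENNReal.ofReal (Real.exp ((s * x j) *
        v ⟨(i, j), Finset.mem_singleton_self _⟩)) with hFdef
    have hF : ∀ j, Measurable (F j) := by
      intro j
      apply Measurable.ennreal_ofReal
      apply Measurable.exp
      apply Measurable.mul measurable_const
      exact measurable_pi_apply _
    have hdisj : ((Finset.univ : Finset (Fin m)) : Set (Fin m)).PairwiseDisjoint T := by
      intro j _ k _ hjk
      simp only [hTdef, Finset.disjoint_singleton]
      exact fun h => hjk (by simpa using congrArg Prod.snd h)
    have hgroup := group_lintegral_prod X hindep hXm T F hF Finset.univ hdisj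
    have hptw : ∀ ω, ENNReal.ofReal (Real.exp (s * V i ω))
        = ∏ j, F j (fun p => X p.1 ω) := by
      intro ω
      have h1 : s * V i ω = ∑ j, (s * x j) * Y i j ω := by
        rw [hVdef]; simp only []
        rw [Finset.mul_sum]
        exact Finset.sum_congr rfl fun j _ => by ring
      rw [h1, Real.exp_sum, ENNReal.ofReal_prod_of_nonneg (fun j _ => (Real.exp_pos _).le)]
    calc ∫⁻ ω, ENNReal.ofReal (Real.exp (s * V i ω)) ∂μ
        = ∫⁻ ω, ∏ j, F j (fun p => X p.1 ω) ∂μ := by simp_rw [hptw]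
      _ = ∏ j, ∫⁻ ω, F j (fun p => X p.1 ω) ∂μ := hgroup
      _ ≤ ∏ j, ENNReal.ofReal (Real.exp (B ^ 2 * (s * x j) ^ 2 / 2)) := by
          refine Finset.prod_le_prod' fun j _ => ?_
          exact hsub i j (s * x j)
      _ = ENNReal.ofReal (Real.exp (B ^ 2 * s ^ 2 / 2)) := by
          rw [← ENNReal.ofReal_prod_of_nonneg (fun j _ => (Real.exp_pos _).le),
            ← Real.exp_sum]
          congr 2
          calc ∑ j, B ^ 2 * (s * x j) ^ 2 / 2
              = ∑ j, (B ^ 2 * s ^ 2 / 2) * (x j) ^ 2 :=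
                Finset.sum_congr rfl fun j _ => by ring
            _ = B ^ 2 * s ^ 2 / 2 := by rw [← Finset.mul_sum, hx, mul_one]
  -- Each term exp(lam i * V_i^2 / (4B^2)) has small expectation
  have hterm : ∀ i, ∫⁻ ω, ENNReal.ofReal (Real.exp (lam i * (V i ω) ^ 2 / (4 * B ^ 2))) ∂μ ≤
      ENNReal.ofReal (Real.exp (lam i / 2)) := fun i =>
    subgaussian_sq_bound μ B hB (V i) (hVmeas i) (hrow i) (lam i) (hlam i).1 (hlam i).2
  -- Product over rows via independence
  set T : Fin d → Finset (Fin d × Fin m) :=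
    fun i => {i} ×ˢ (Finset.univ : Finset (Fin m)) with hTdef
  have hmemT : ∀ i j, (i, j) ∈ T i := fun i j => by simp [hTdef]
  set F : ∀ i : Fin d, ({p // p ∈ T i} → ℝ) → ENNReal :=
    fun i v => ENNReal.ofReal (Real.exp (lam i *
      (∑ j, v ⟨(i, j), hmemT i j⟩ * x j) ^ 2 / (4 * B ^ 2))) with hFdef
  have hF : ∀ i, Measurable (F i) := by
    intro i
    apply Measurable.ennreal_ofReal
    apply Measurable.exp
    apply Measurable.div_const
    apply Measurable.mul measurable_const
    apply Measurable.pow_const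
    apply Finset.measurable_sum
    intro j _
    apply Measurable.mul_const
    exact measurable_pi_apply _
  have hdisj : ((Finset.univ : Finset (Fin d)) : Set (Fin d)).PairwiseDisjoint T := by
    intro i _ k _ hik
    simp only [hTdef, Finset.disjoint_left, Finset.mem_product, Finset.mem_singleton]
    rintro ⟨a, b⟩ ⟨rfl, -⟩ ⟨rfl, -⟩
    exact hik rfl
  have hgroup := group_lintegral_prod X hindep hXm T F hF Finset.univ hdisj
  set S : Ω → ℝ := fun ω => ∑ i, lam i * (V i ω) ^ 2 with hSdef
  have hSmeas : Measurable S :=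
    Finset.measurable_sum _ fun i _ => measurable_const.mul ((hVmeas i).pow_const 2)
  have hSnonneg : ∀ ω, 0 ≤ S ω :=
    fun ω => Finset.sum_nonneg fun i _ => mul_nonneg (hlam i).1 (sq_nonneg _)
  set f : Ω → ENNReal := fun ω => ENNReal.ofReal (Real.exp (S ω / (4 * B ^ 2))) with hfdef
  have hfmeas : Measurable f := ((hSmeas.div_const _).exp).ennreal_ofReal
  have hfprod : ∀ ω, f ω = ∏ i, F i (fun p => X p.1 ω) := by
    intro ω
    have h1 : S ω / (4 * B ^ 2) = ∑ i, lam i * (V i ω) ^ 2 / (4 * B ^ 2) := by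
      rw [hSdef]; exact Finset.sum_div _ _ _
    rw [hfdef]
    simp only []
    rw [h1, Real.exp_sum, ENNReal.ofReal_prod_of_nonneg (fun i _ => (Real.exp_pos _).le)]
  have hintf : ∫⁻ ω, f ω ∂μ ≤ ENNReal.ofReal (Real.exp ((∑ i, lam i) / 2)) := by
    calc ∫⁻ ω, f ω ∂μ = ∫⁻ ω, ∏ i, F i (fun p => X p.1 ω) ∂μ := by simp_rw [hfprod]
      _ = ∏ i, ∫⁻ ω, F i (fun p => X p.1 ω) ∂μ := hgroup
      _ ≤ ∏ i, ENNReal.ofReal (Real.exp (lam i / 2)) :=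
          Finset.prod_le_prod' fun i _ => hterm i
      _ = ENNReal.ofReal (Real.exp ((∑ i, lam i) / 2)) := by
          rw [← ENNReal.ofReal_prod_of_nonneg (fun i _ => (Real.exp_pos _).le), ← Real.exp_sum,
            Finset.sum_div]
  set ε : ENNReal := ENNReal.ofReal (Real.exp (z ^ 2 / (4 * B ^ 2))) with hεdef
  have hε0 : ε ≠ 0 := by rw [hεdef]; exact (ENNReal.ofReal_pos.2 (Real.exp_pos _)).ne'
  have hεtop : ε ≠ ⊤ := ENNReal.ofReal_ne_top
  have hsubset : {ω : Ω | z ≤ Real.sqrt (S ω)} ⊆ {ω : Ω | ε ≤ f ω} := by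
    intro ω hω
    simp only [Set.mem_setOf_eq] at hω ⊢
    have hz2 : z ^ 2 ≤ S ω := by
      have h1 : z ^ 2 ≤ Real.sqrt (S ω) ^ 2 := by
        apply pow_le_pow_left₀ hz hω
      rwa [Real.sq_sqrt (hSnonneg ω)] at h1
    rw [hεdef, hfdef]
    apply ENNReal.ofReal_le_ofReal
    apply Real.exp_le_exp.2
    apply div_le_div_of_nonneg_right hz2 -- may need right lemma
    positivity
  have hmarkov : ε * μ {ω | ε ≤ f ω} ≤ ∫⁻ ω, f ω ∂μ :=
    mul_meas_ge_le_lintegral₀ hfmeas.aemeasurable ε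
  calc μ {ω : Ω | z ≤ Real.sqrt (∑ i, lam i * (∑ j, Y i j ω * x j) ^ 2)}
      = μ {ω : Ω | z ≤ Real.sqrt (S ω)} := rfl
    _ ≤ μ {ω | ε ≤ f ω} := measure_mono hsubset
    _ ≤ (∫⁻ ω, f ω ∂μ) / ε := by
        rw [ENNReal.le_div_iff_mul_le (Or.inl hε0) (Or.inl hεtop), mul_comm]
        exact hmarkov
    _ ≤ ENNReal.ofReal (Real.exp ((∑ i, lam i) / 2)) / ε :=
        ENNReal.div_le_div_right hintf _
    _ = ENNReal.ofReal (Real.exp ((∑ i, lam i) / 2 - z ^ 2 / (4 * B ^ 2))) := by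
        rw [hεdef, ← ENNReal.ofReal_div_of_pos (Real.exp_pos _), ← Real.exp_sub]
end

section
/- Let Y₁,…,Y_m be independent real random variables that are centered (E[Y_j] = 0) and have fourth moments E[Y_j⁴] ≤ B, and let x ∈ ℝ^m be a unit vector. Then E[(Σ_{j=1}^m Y_j x_j)⁴] ≤ 48·B. -/
open MeasureTheory ProbabilityTheory
open scoped ENNReal


section Aux

variable {Ω : Type*} [MeasurableSpace Ω] {μ : Measure Ω} [IsProbabilityMeasure μ]

lemma aux_memLp_sq {f : Ω → ℝ} (hf : MemLp f 4 μ) :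
    MemLp (fun ω => f ω ^ 2) 2 μ := by
  have hpqr : (1 : ℝ≥0∞) / 2 = 1 / 4 + 1 / 4 := by
    simp only [one_div]
    have h4 : (4:ℝ≥0∞) = 2 * 2 := by norm_num
    rw [h4, ENNReal.mul_inv (by norm_num) (by norm_num), ← two_mul, ← mul_assoc,
      ENNReal.mul_inv_cancel (by norm_num) (by norm_num), one_mul]
  haveI : ENNReal.HolderTriple 4 4 2 := ⟨by simpa [one_div] using hpqr.symm⟩
  have h : MemLp (f • f) 2 μ := hf.smul hf
  have heq : (f • f) = fun ω => f ω ^ 2 := by funext ω; simp [smul_eq_mul, sq]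
  rwa [heq] at h

lemma aux_integrable_pow {f : Ω → ℝ} (hf : MemLp f 4 μ) {n : ℕ} (hn : n ≤ 4) :
    Integrable (fun ω => f ω ^ n) μ := by
  have h4 : Integrable (fun ω => f ω ^ 4) μ := by
    have h := (aux_memLp_sq hf).integrable_sq
    exact h.congr (Filter.Eventually.of_forall fun ω => by ring)
  refine Integrable.mono ((integrable_const (1 : ℝ)).add h4) ?_ ?_
  · exact (hf.aestronglyMeasurable.pow n)
  · refine Filter.Eventually.of_forall fun ω => ?_
    have h1 : (0:ℝ) ≤ f ω ^ 4 := by positivity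
    have h2 : |f ω| ^ n ≤ 1 + f ω ^ 4 := by
      rcases le_total (|f ω|) 1 with h | h
      · have := pow_le_one₀ (abs_nonneg _) h (n := n)
        nlinarith
      · have := pow_le_pow_right₀ h hn
        have h4' : |f ω| ^ 4 = f ω ^ 4 := by
          rw [← abs_pow]; exact abs_of_nonneg h1
        nlinarith
    simp only [Real.norm_eq_abs, abs_pow]
    calc |f ω| ^ n ≤ 1 + f ω ^ 4 := h2
      _ ≤ |1 + f ω ^ 4| := le_abs_self _

lemma aux_sq_integral_le {f : Ω → ℝ} (hf : MemLp f 4 μ) :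
    (∫ ω, f ω ^ 2 ∂μ) ^ 2 ≤ ∫ ω, f ω ^ 4 ∂μ := by
  have h2 : MemLp (fun ω => f ω ^ 2) 2 μ := aux_memLp_sq hf
  have hvar := variance_nonneg (fun ω => f ω ^ 2) μ
  rw [variance_eq_sub h2] at hvar
  have heq : (∫ ω, ((fun ω => f ω ^ 2) ^ 2) ω ∂μ) = ∫ ω, f ω ^ 4 ∂μ := by
    congr 1; funext ω; simp [Pi.pow_apply]; ring
  simp only [Pi.pow_apply] at hvar
  have : (∫ ω, (f ω ^ 2) ^ 2 ∂μ) = ∫ ω, f ω ^ 4 ∂μ := by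
    congr 1; funext ω; ring
  linarith [hvar, this.symm.le, this.le]

end Aux


/-- If `Y₁,…,Y_m` are independent centered real random variables
with fourth moments at most `B`, and `x ∈ ℝ^m` is a unit vector, then
`E[(Σⱼ Yⱼ xⱼ)⁴] ≤ 48 B`. -/
theorem fourth_moment_khinchine_bound
    (m : ℕ) (hm : 0 < m) (B : ℝ) (hB : 0 ≤ B)
    (Ω : Type*) [MeasurableSpace Ω] (μ : Measure Ω) [IsProbabilityMeasure μ]
    (Y : Fin m → Ω → ℝ)
    (hmeas : ∀ j, Measurable (Y j))
    (hindep : iIndepFun Y μ)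
    (hL4 : ∀ j, MemLp (Y j) 4 μ)
    (hcentered : ∀ j, ∫ ω, Y j ω ∂μ = 0)
    (hfourth : ∀ j, ∫ ω, (Y j ω) ^ 4 ∂μ ≤ B)
    (x : Fin m → ℝ) (hx : ∑ j, (x j) ^ 2 = 1) :
    ∫ ω, (∑ j, Y j ω * x j) ^ 4 ∂μ ≤ 48 * B := by
  classical
  set Z : Fin m → Ω → ℝ := fun j ω => Y j ω * x j with hZdef
  have hZmeas : ∀ j, Measurable (Z j) := fun j => (hmeas j).mul_const _
  have hZindep : iIndepFun Z μ :=
    hindep.comp (fun j t => t * x j) (fun j => measurable_mul_const _)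
  have hZ4 : ∀ j, MemLp (Z j) 4 μ := by
    intro j
    have h := (hL4 j).const_mul (x j)
    have heq : (fun ω => x j * Y j ω) = Z j := by funext ω; simp [hZdef, mul_comm]
    rwa [heq] at h
  have hZint0 : ∀ j, ∫ ω, Z j ω ∂μ = 0 := by
    intro j
    simp only [hZdef]
    rw [integral_mul_const, hcentered j, zero_mul]
  have hsqrtB : Real.sqrt B * Real.sqrt B = B := Real.mul_self_sqrt hB
  have hY2 : ∀ j, ∫ ω, Y j ω ^ 2 ∂μ ≤ Real.sqrt B := by
    intro j
    have h1 : (∫ ω, Y j ω ^ 2 ∂μ) ^ 2 ≤ ∫ ω, Y j ω ^ 4 ∂μ := aux_sq_integral_le (hL4 j)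
    have h2 : (∫ ω, Y j ω ^ 2 ∂μ) ^ 2 ≤ B := h1.trans (hfourth j)
    have h3 : 0 ≤ ∫ ω, Y j ω ^ 2 ∂μ := integral_nonneg fun ω => sq_nonneg _
    nlinarith [Real.sqrt_nonneg B]
  have hZ2le : ∀ j, ∫ ω, Z j ω ^ 2 ∂μ ≤ Real.sqrt B * x j ^ 2 := by
    intro j
    have he : ∫ ω, Z j ω ^ 2 ∂μ = (∫ ω, Y j ω ^ 2 ∂μ) * x j ^ 2 := by
      simp only [hZdef, mul_pow]
      exact integral_mul_const _ _
    rw [he]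
    exact mul_le_mul_of_nonneg_right (hY2 j) (sq_nonneg _)
  have hZ4le : ∀ j, ∫ ω, Z j ω ^ 4 ∂μ ≤ B * x j ^ 4 := by
    intro j
    have he : ∫ ω, Z j ω ^ 4 ∂μ = (∫ ω, Y j ω ^ 4 ∂μ) * x j ^ 4 := by
      simp only [hZdef, mul_pow]
      exact integral_mul_const _ _
    rw [he]
    exact mul_le_mul_of_nonneg_right (hfourth j) (by positivity)
  -- the key induction
  have key : ∀ s : Finset (Fin m),
      MemLp (fun ω => ∑ j ∈ s, Z j ω) 4 μ ∧
      (∫ ω, (∑ j ∈ s, Z j ω) ∂μ) = 0 ∧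
      (∫ ω, (∑ j ∈ s, Z j ω) ^ 2 ∂μ) ≤ Real.sqrt B * ∑ j ∈ s, x j ^ 2 ∧
      (∫ ω, (∑ j ∈ s, Z j ω) ^ 4 ∂μ) ≤
        3 * B * (∑ j ∈ s, x j ^ 2) ^ 2 + B * ∑ j ∈ s, x j ^ 4 := by
    intro s
    induction s using Finset.induction_on with
    | empty =>
      refine ⟨?_, ?_, ?_, ?_⟩ <;>
        simp [memLp_const (0 : ℝ), Real.sqrt_nonneg B]
    | @insert a s has ih =>
      obtain ⟨ihL4, ihmean, ih2, ih4⟩ := ih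
      set f : Ω → ℝ := fun ω => ∑ j ∈ s, Z j ω with hfdef
      set g : Ω → ℝ := Z a with hgdef
      have hins : (fun ω => ∑ j ∈ insert a s, Z j ω) = fun ω => g ω + f ω := by
        funext ω; exact Finset.sum_insert has
      have hsum_eq : (∑ j ∈ s, Z j) = f := by
        funext ω; exact Finset.sum_apply ω s Z
      have hfg : IndepFun f g μ := by
        have h := hZindep.indepFun_finsetSum_of_notMem hZmeas has
        rwa [hsum_eq] at h
      have hpow : ∀ p q : ℕ, IndepFun (fun ω => f ω ^ p) (fun ω => g ω ^ q) μ := by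
        intro p q
        exact hfg.comp (measurable_id.pow_const p) (measurable_id.pow_const q)
      -- integrabilities
      have if1 : Integrable f μ := (aux_integrable_pow ihL4 (by norm_num : 1 ≤ 4)).congr
        (Filter.Eventually.of_forall fun ω => by simp)
      have ifn : ∀ n, n ≤ 4 → Integrable (fun ω => f ω ^ n) μ := fun n hn =>
        aux_integrable_pow ihL4 hn
      have ign : ∀ n, n ≤ 4 → Integrable (fun ω => g ω ^ n) μ := fun n hn =>
        aux_integrable_pow (hZ4 a) hn
      have ig1 : Integrable g μ := (ign 1 (by norm_num)).congr
        (Filter.Eventually.of_forall fun ω => by simp)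
      have iprod : ∀ p q : ℕ, p ≤ 4 → q ≤ 4 →
          Integrable (fun ω => f ω ^ p * g ω ^ q) μ := fun p q hp hq =>
        (hpow p q).integrable_mul (ifn p hp) (ign q hq)
      have eprod : ∀ p q : ℕ, p ≤ 4 → q ≤ 4 →
          ∫ ω, f ω ^ p * g ω ^ q ∂μ =
            (∫ ω, f ω ^ p ∂μ) * (∫ ω, g ω ^ q ∂μ) := fun p q hp hq =>
        (hpow p q).integral_mul_eq_mul_integral (ifn p hp).1 (ign q hq).1
      -- memLp of the new sum
      have hL4' : MemLp (fun ω => g ω + f ω) 4 μ := by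
        have := (hZ4 a).add ihL4
        have heq : (g + f) = fun ω => g ω + f ω := rfl
        rwa [heq] at this
      -- mean zero
      have hf0 : ∫ ω, f ω ∂μ = 0 := ihmean
      have hg0 : ∫ ω, g ω ∂μ = 0 := hZint0 a
      have hmean' : ∫ ω, (g ω + f ω) ∂μ = 0 := by
        rw [integral_add ig1 if1, hf0, hg0, add_zero]
      -- second moment
      have hf2nn : 0 ≤ ∫ ω, f ω ^ 2 ∂μ := integral_nonneg fun ω => sq_nonneg _
      have hg2nn : 0 ≤ ∫ ω, g ω ^ 2 ∂μ := integral_nonneg fun ω => sq_nonneg _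
      have h2exp : ∫ ω, (g ω + f ω) ^ 2 ∂μ =
          (∫ ω, f ω ^ 2 ∂μ) + 2 * ((∫ ω, f ω ∂μ) * (∫ ω, g ω ∂μ)) +
            (∫ ω, g ω ^ 2 ∂μ) := by
        have heq : (fun ω => (g ω + f ω) ^ 2) =
            fun ω => f ω ^ 2 + 2 * (f ω ^ 1 * g ω ^ 1) + g ω ^ 2 := by
          funext ω; ring
        have c11 : Integrable (fun ω => 2 * (f ω ^ 1 * g ω ^ 1)) μ :=
          (iprod 1 1 (by norm_num) (by norm_num)).const_mul 2
        have e1 : ∫ ω, (f ω ^ 2 + 2 * (f ω ^ 1 * g ω ^ 1) + g ω ^ 2) ∂μ =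
            (∫ ω, (f ω ^ 2 + 2 * (f ω ^ 1 * g ω ^ 1)) ∂μ) + ∫ ω, g ω ^ 2 ∂μ :=
          integral_add ((ifn 2 (by norm_num)).add c11) (ign 2 (by norm_num))
        have e2 : ∫ ω, (f ω ^ 2 + 2 * (f ω ^ 1 * g ω ^ 1)) ∂μ =
            (∫ ω, f ω ^ 2 ∂μ) + ∫ ω, 2 * (f ω ^ 1 * g ω ^ 1) ∂μ :=
          integral_add (ifn 2 (by norm_num)) c11
        have e3 : ∫ ω, 2 * (f ω ^ 1 * g ω ^ 1) ∂μ = 2 * ∫ ω, f ω ^ 1 * g ω ^ 1 ∂μ :=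
          integral_const_mul _ _
        rw [heq, e1, e2, e3, eprod 1 1 (by norm_num) (by norm_num)]
        simp [pow_one]
      -- fourth moment
      have h4exp : ∫ ω, (g ω + f ω) ^ 4 ∂μ =
          (∫ ω, f ω ^ 4 ∂μ) + 4 * ((∫ ω, f ω ^ 3 ∂μ) * (∫ ω, g ω ∂μ)) +
            6 * ((∫ ω, f ω ^ 2 ∂μ) * (∫ ω, g ω ^ 2 ∂μ)) +
            4 * ((∫ ω, f ω ∂μ) * (∫ ω, g ω ^ 3 ∂μ)) + (∫ ω, g ω ^ 4 ∂μ) := by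
        have heq : (fun ω => (g ω + f ω) ^ 4) =
            fun ω => f ω ^ 4 + 4 * (f ω ^ 3 * g ω ^ 1) + 6 * (f ω ^ 2 * g ω ^ 2) +
              4 * (f ω ^ 1 * g ω ^ 3) + g ω ^ 4 := by
          funext ω; ring
        have i1 : Integrable (fun ω => f ω ^ 4) μ := ifn 4 (by norm_num)
        have i2 : Integrable (fun ω => 4 * (f ω ^ 3 * g ω ^ 1)) μ :=
          (iprod 3 1 (by norm_num) (by norm_num)).const_mul 4
        have i3 : Integrable (fun ω => 6 * (f ω ^ 2 * g ω ^ 2)) μ :=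
          (iprod 2 2 (by norm_num) (by norm_num)).const_mul 6
        have i4 : Integrable (fun ω => 4 * (f ω ^ 1 * g ω ^ 3)) μ :=
          (iprod 1 3 (by norm_num) (by norm_num)).const_mul 4
        have i5 : Integrable (fun ω => g ω ^ 4) μ := ign 4 (by norm_num)
        have e1 : ∫ ω, (f ω ^ 4 + 4 * (f ω ^ 3 * g ω ^ 1) + 6 * (f ω ^ 2 * g ω ^ 2) +
              4 * (f ω ^ 1 * g ω ^ 3) + g ω ^ 4) ∂μ =
            (∫ ω, (f ω ^ 4 + 4 * (f ω ^ 3 * g ω ^ 1) + 6 * (f ω ^ 2 * g ω ^ 2) +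
              4 * (f ω ^ 1 * g ω ^ 3)) ∂μ) + ∫ ω, g ω ^ 4 ∂μ :=
          integral_add (((i1.add i2).add i3).add i4) i5
        have e2 : ∫ ω, (f ω ^ 4 + 4 * (f ω ^ 3 * g ω ^ 1) + 6 * (f ω ^ 2 * g ω ^ 2) +
              4 * (f ω ^ 1 * g ω ^ 3)) ∂μ =
            (∫ ω, (f ω ^ 4 + 4 * (f ω ^ 3 * g ω ^ 1) + 6 * (f ω ^ 2 * g ω ^ 2)) ∂μ) +
              ∫ ω, 4 * (f ω ^ 1 * g ω ^ 3) ∂μ :=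
          integral_add ((i1.add i2).add i3) i4
        have e3 : ∫ ω, (f ω ^ 4 + 4 * (f ω ^ 3 * g ω ^ 1) + 6 * (f ω ^ 2 * g ω ^ 2)) ∂μ =
            (∫ ω, (f ω ^ 4 + 4 * (f ω ^ 3 * g ω ^ 1)) ∂μ) +
              ∫ ω, 6 * (f ω ^ 2 * g ω ^ 2) ∂μ :=
          integral_add (i1.add i2) i3
        have e4 : ∫ ω, (f ω ^ 4 + 4 * (f ω ^ 3 * g ω ^ 1)) ∂μ =
            (∫ ω, f ω ^ 4 ∂μ) + ∫ ω, 4 * (f ω ^ 3 * g ω ^ 1) ∂μ :=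
          integral_add i1 i2
        have c2 : ∫ ω, 4 * (f ω ^ 3 * g ω ^ 1) ∂μ = 4 * ∫ ω, f ω ^ 3 * g ω ^ 1 ∂μ :=
          integral_const_mul _ _
        have c3 : ∫ ω, 6 * (f ω ^ 2 * g ω ^ 2) ∂μ = 6 * ∫ ω, f ω ^ 2 * g ω ^ 2 ∂μ :=
          integral_const_mul _ _
        have c4 : ∫ ω, 4 * (f ω ^ 1 * g ω ^ 3) ∂μ = 4 * ∫ ω, f ω ^ 1 * g ω ^ 3 ∂μ :=
          integral_const_mul _ _
        rw [heq, e1, e2, e3, e4, c2, c3, c4, eprod 3 1 (by norm_num) (by norm_num),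
          eprod 2 2 (by norm_num) (by norm_num), eprod 1 3 (by norm_num) (by norm_num)]
        simp [pow_one]
      -- bounds
      have hT : (0:ℝ) ≤ ∑ j ∈ s, x j ^ 2 := Finset.sum_nonneg fun j _ => sq_nonneg _
      have hg2le : ∫ ω, g ω ^ 2 ∂μ ≤ Real.sqrt B * x a ^ 2 := hZ2le a
      have hg4le : ∫ ω, g ω ^ 4 ∂μ ≤ B * x a ^ 4 := hZ4le a
      have hprod : (∫ ω, f ω ^ 2 ∂μ) * (∫ ω, g ω ^ 2 ∂μ) ≤
          (Real.sqrt B * ∑ j ∈ s, x j ^ 2) * (Real.sqrt B * x a ^ 2) :=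
        mul_le_mul ih2 hg2le hg2nn (by positivity)
      refine ⟨?_, ?_, ?_, ?_⟩
      · rw [hins]; exact hL4'
      · rw [hins]; exact hmean'
      · have hgoal2 : ∫ ω, (∑ j ∈ insert a s, Z j ω) ^ 2 ∂μ =
            ∫ ω, (g ω + f ω) ^ 2 ∂μ := by
          congr 1; funext ω; rw [Finset.sum_insert has]
        rw [hgoal2, h2exp, hf0, hg0, Finset.sum_insert has]
        nlinarith [Real.sqrt_nonneg B, sq_nonneg (x a)]
      · have hgoal4 : ∫ ω, (∑ j ∈ insert a s, Z j ω) ^ 4 ∂μ =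
            ∫ ω, (g ω + f ω) ^ 4 ∂μ := by
          congr 1; funext ω; rw [Finset.sum_insert has]
        rw [hgoal4, h4exp, hf0, hg0, Finset.sum_insert has, Finset.sum_insert has]
        have hexpand : (Real.sqrt B * ∑ j ∈ s, x j ^ 2) * (Real.sqrt B * x a ^ 2) =
            B * ((∑ j ∈ s, x j ^ 2) * x a ^ 2) := by
          rw [mul_mul_mul_comm, hsqrtB]
        rw [hexpand] at hprod
        nlinarith [sq_nonneg (x a), hB, hT]
  obtain ⟨-, -, -, hfinal⟩ := key Finset.univ
  have hW : ∑ j, x j ^ 4 ≤ 1 := by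
    have h := Finset.sum_sq_le_sq_sum_of_nonneg
      (f := fun j => x j ^ 2) (s := (Finset.univ : Finset (Fin m)))
      (fun j _ => sq_nonneg _)
    rw [hx] at h
    calc ∑ j, x j ^ 4 = ∑ j, (x j ^ 2) ^ 2 := by
          apply Finset.sum_congr rfl; intro j _; ring
      _ ≤ 1 ^ 2 := h
      _ = 1 := one_pow 2
  have heqgoal : (∫ ω, (∑ j, Y j ω * x j) ^ 4 ∂μ) =
      ∫ ω, (∑ j ∈ Finset.univ, Z j ω) ^ 4 ∂μ := rfl
  rw [heqgoal, hx] at *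
  calc (∫ ω, (∑ j ∈ Finset.univ, Z j ω) ^ 4 ∂μ) ≤
      3 * B * 1 ^ 2 + B * ∑ j, x j ^ 4 := by rw [← hx]; exact hfinal
    _ ≤ 3 * B + B * 1 := by
        nlinarith
    _ ≤ 48 * B := by nlinarith
end
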